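/- arXiv:2212.03800 — 2 statements merged into one kernel-verified Lean document; each statement's English description precedes it below -/
import Mathlib

section
/- Any θ̄ > 0 that is a local minimizer of the map θ ↦ KL(g* ‖ g_θ) is a fixed point of the population EM operator: E_{X∼g*}[X tanh(θ̄ X)] = θ̄. -/
open MeasureTheory

noncomputable section

/-- Standard normal density `φ`. -/
def stdPdf (x : ℝ) : ℝ := (Real.sqrt (2 * Real.pi))⁻¹ * Real.exp (-x ^ 2 / 2)

/-- True density: three-component Gaussian mixture with unit variances,
`g*(x) = (1/4)φ(x − θ*(−ρ−1)) + (1/2)φ(x − θ*) + (1/4)φ(x − θ*(ρ−1))`. -/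
def gstar (θs ρ x : ℝ) : ℝ :=
  (1 / 4) * stdPdf (x - θs * (-ρ - 1)) + (1 / 2) * stdPdf (x - θs)
    + (1 / 4) * stdPdf (x - θs * (ρ - 1))

/-- Fitted two-component symmetric model `g_θ(x) = (1/2)φ(x−θ) + (1/2)φ(x+θ)`. -/
def gmod (θ x : ℝ) : ℝ := (1 / 2) * stdPdf (x - θ) + (1 / 2) * stdPdf (x + θ)

/-- The probability measure on `ℝ` with Lebesgue density `g*`. -/
def gstarMeasure (θs ρ : ℝ) : Measure ℝ :=
  volume.withDensity fun x => ENNReal.ofReal (gstar θs ρ x)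

/-- Kullback–Leibler divergence `KL(g* ‖ g_θ)` between the measures with Lebesgue
densities `g*` and `g_θ`. -/
def klg (θs ρ θ : ℝ) : ℝ := ∫ x, gstar θs ρ x * Real.log (gstar θs ρ x / gmod θ x)

/-- Population EM operator `M(θ) = E_{X ∼ g*}[X tanh(θ X)]`. -/
def Mpop (θs ρ θ : ℝ) : ℝ := ∫ x, x * Real.tanh (θ * x) ∂(gstarMeasure θs ρ)

/- ### basic facts -/

lemma one_le_sqrt2pi : 1 ≤ Real.sqrt (2 * Real.pi) := by
  rw [show (1:ℝ) = Real.sqrt 1 by simp]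
  exact Real.sqrt_le_sqrt (by nlinarith [Real.pi_gt_three])

lemma sqrt2pi_pos : 0 < Real.sqrt (2 * Real.pi) := lt_of_lt_of_le one_pos one_le_sqrt2pi

lemma stdPdf_pos (x : ℝ) : 0 < stdPdf x :=
  mul_pos (inv_pos.mpr sqrt2pi_pos) (Real.exp_pos _)

lemma stdPdf_le_one (x : ℝ) : stdPdf x ≤ 1 := by
  have h1 : Real.exp (-x ^ 2 / 2) ≤ 1 := Real.exp_le_one_iff.mpr (by nlinarith [sq_nonneg x])
  have h2 : (Real.sqrt (2 * Real.pi))⁻¹ ≤ 1 := by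
    rw [inv_le_one_iff₀]; right; exact one_le_sqrt2pi
  calc stdPdf x ≤ (Real.sqrt (2 * Real.pi))⁻¹ * 1 :=
        mul_le_mul_of_nonneg_left h1 (inv_pos.mpr sqrt2pi_pos).le
    _ ≤ 1 := by rw [mul_one]; exact h2

lemma log_stdPdf (y : ℝ) :
    Real.log (stdPdf y) = -Real.log (Real.sqrt (2 * Real.pi)) - y ^ 2 / 2 := by
  rw [stdPdf, Real.log_mul (inv_ne_zero sqrt2pi_pos.ne') (Real.exp_ne_zero _),
    Real.log_inv, Real.log_exp]
  ring

lemma continuous_stdPdf : Continuous stdPdf :=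
  continuous_const.mul (((continuous_pow 2).neg.div_const 2).rexp)

lemma gstar_pos (θs ρ x : ℝ) : 0 < gstar θs ρ x := by
  have h1 := stdPdf_pos (x - θs * (-ρ - 1))
  have h2 := stdPdf_pos (x - θs)
  have h3 := stdPdf_pos (x - θs * (ρ - 1))
  unfold gstar; linarith

lemma gstar_le_one (θs ρ x : ℝ) : gstar θs ρ x ≤ 1 := by
  have h1 := stdPdf_le_one (x - θs * (-ρ - 1))
  have h2 := stdPdf_le_one (x - θs)
  have h3 := stdPdf_le_one (x - θs * (ρ - 1))
  unfold gstar; linarith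

lemma gmod_pos (θ x : ℝ) : 0 < gmod θ x := by
  have h1 := stdPdf_pos (x - θ)
  have h2 := stdPdf_pos (x + θ)
  unfold gmod; linarith

lemma gmod_le_one (θ x : ℝ) : gmod θ x ≤ 1 := by
  have h1 := stdPdf_le_one (x - θ)
  have h2 := stdPdf_le_one (x + θ)
  unfold gmod; linarith

lemma continuous_gstar (θs ρ : ℝ) : Continuous (gstar θs ρ) := by
  unfold gstar
  exact ((continuous_const.mul (continuous_stdPdf.comp (continuous_id.sub continuous_const))).add
    (continuous_const.mul (continuous_stdPdf.comp (continuous_id.sub continuous_const)))).add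
    (continuous_const.mul (continuous_stdPdf.comp (continuous_id.sub continuous_const)))

lemma continuous_gmod_x (θ : ℝ) : Continuous (gmod θ) := by
  unfold gmod
  exact (continuous_const.mul (continuous_stdPdf.comp (continuous_id.sub continuous_const))).add
    (continuous_const.mul (continuous_stdPdf.comp (continuous_id.add continuous_const)))

lemma continuous_tanh : Continuous Real.tanh :=
  (Real.continuous_sinh.div Real.continuous_cosh fun x => (Real.cosh_pos x).ne').congr
    fun x => (Real.tanh_eq_sinh_div_cosh x).symm

lemma abs_tanh_le_one (t : ℝ) : |Real.tanh t| ≤ 1 := by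
  rw [Real.tanh_eq_sinh_div_cosh, abs_div, abs_of_pos (Real.cosh_pos t),
    div_le_one (Real.cosh_pos t)]
  rw [abs_le, Real.sinh_eq, Real.cosh_eq]
  constructor <;> nlinarith [Real.exp_pos t, Real.exp_pos (-t)]

/- ### integrability -/

lemma exp_half_eq (y : ℝ) : Real.exp (-y ^ 2 / 2) = Real.exp (-(1/2 : ℝ) * y ^ 2) := by
  ring_nf

lemma integrable_quad_exp : Integrable (fun y : ℝ => y ^ 2 * Real.exp (-(1/2 : ℝ) * y ^ 2)) := by
  have := integrable_rpow_mul_exp_neg_mul_sq (by norm_num : (0:ℝ) < 1/2)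
    (by norm_num : (-1:ℝ) < 2)
  have h : ∀ y : ℝ, y ^ (2:ℝ) = y ^ (2:ℕ) := fun y => by
    rw [← Real.rpow_natCast y 2]; norm_num
  simpa [h] using this

lemma integrable_stdPdf : Integrable stdPdf := by
  have := (integrable_exp_neg_mul_sq (by norm_num : (0:ℝ) < 1/2)).const_mul
    (Real.sqrt (2 * Real.pi))⁻¹
  exact this.congr (Filter.Eventually.of_forall fun y => by
    simp only [stdPdf, exp_half_eq])

lemma integrable_quad_stdPdf (μ : ℝ) :
    Integrable (fun x : ℝ => (1 + x ^ 2) * stdPdf (x - μ)) := by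
  have h0 := integrable_exp_neg_mul_sq (by norm_num : (0:ℝ) < 1/2)
  have h1 := integrable_mul_exp_neg_mul_sq (by norm_num : (0:ℝ) < 1/2)
  have h2 := integrable_quad_exp
  have hsum := ((h0.const_mul (1 + μ ^ 2)).add (h1.const_mul (2 * μ))).add h2
  have hbase : Integrable (fun y : ℝ => (1 + (y + μ) ^ 2) * stdPdf y) := by
    have := hsum.const_mul (Real.sqrt (2 * Real.pi))⁻¹
    exact this.congr (Filter.Eventually.of_forall fun y => by
      simp only [stdPdf, exp_half_eq, Pi.add_apply]; ring)
  have := hbase.comp_sub_right μ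
  exact this.congr (Filter.Eventually.of_forall fun x => by ring_nf)

lemma integrable_quad_gstar (θs ρ : ℝ) :
    Integrable (fun x : ℝ => (1 + x ^ 2) * gstar θs ρ x) := by
  have h1 := (integrable_quad_stdPdf (θs * (-ρ - 1))).const_mul (1/4 : ℝ)
  have h2 := (integrable_quad_stdPdf θs).const_mul (1/2 : ℝ)
  have h3 := (integrable_quad_stdPdf (θs * (ρ - 1))).const_mul (1/4 : ℝ)
  exact ((h1.add h2).add h3).congr (Filter.Eventually.of_forall fun x => by
    simp only [gstar, Pi.add_apply]; ring)

lemma integrable_gstar (θs ρ : ℝ) : Integrable (fun x => gstar θs ρ x) := by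
  have h1 := (integrable_stdPdf.comp_sub_right (θs * (-ρ - 1))).const_mul (1/4 : ℝ)
  have h2 := (integrable_stdPdf.comp_sub_right θs).const_mul (1/2 : ℝ)
  have h3 := (integrable_stdPdf.comp_sub_right (θs * (ρ - 1))).const_mul (1/4 : ℝ)
  exact ((h1.add h2).add h3).congr (Filter.Eventually.of_forall fun x => by
    simp only [gstar, Pi.add_apply, Function.comp])

lemma integral_stdPdf : ∫ x, stdPdf x = 1 := by
  have h : ∫ x : ℝ, Real.exp (-(1/2 : ℝ) * x ^ 2) = Real.sqrt (Real.pi / (1/2)) :=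
    integral_gaussian (1/2)
  have h2 : Real.pi / (1/2 : ℝ) = 2 * Real.pi := by ring
  rw [h2] at h
  calc ∫ x, stdPdf x = ∫ x : ℝ, (Real.sqrt (2 * Real.pi))⁻¹ * Real.exp (-(1/2:ℝ) * x ^ 2) := by
        congr 1; funext x; simp only [stdPdf, exp_half_eq]
    _ = (Real.sqrt (2 * Real.pi))⁻¹ * ∫ x : ℝ, Real.exp (-(1/2:ℝ) * x ^ 2) := by
        rw [integral_const_mul]
    _ = 1 := by rw [h]; exact inv_mul_cancel₀ sqrt2pi_pos.ne'

lemma integral_gstar (θs ρ : ℝ) : ∫ x, gstar θs ρ x = 1 := by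
  have key : ∀ μ : ℝ, ∫ x : ℝ, stdPdf (x - μ) = 1 := fun μ => by
    rw [integral_sub_right_eq_self stdPdf μ]; exact integral_stdPdf
  unfold gstar
  rw [integral_add, integral_add, integral_const_mul, integral_const_mul, integral_const_mul,
    key, key, key]
  · ring
  · exact (integrable_stdPdf.comp_sub_right _).const_mul _
  · exact (integrable_stdPdf.comp_sub_right _).const_mul _
  · exact ((integrable_stdPdf.comp_sub_right _).const_mul _).add
      ((integrable_stdPdf.comp_sub_right _).const_mul _)
  · exact (integrable_stdPdf.comp_sub_right _).const_mul _

/- ### derivative computations -/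

lemma stdPdf_exp_form (θ x : ℝ) :
    stdPdf (x - θ) = (Real.sqrt (2 * Real.pi))⁻¹ * Real.exp (-(x^2 + θ^2)/2) * Real.exp (θ * x)
    ∧ stdPdf (x + θ) =
      (Real.sqrt (2 * Real.pi))⁻¹ * Real.exp (-(x^2 + θ^2)/2) * Real.exp (-(θ * x)) := by
  constructor <;>
  · simp only [stdPdf, mul_assoc, ← Real.exp_add]
    congr 1
    ring

lemma gmod_deriv_identity (θ x : ℝ) :
    (1/2) * ((x - θ) * stdPdf (x - θ)) - (1/2) * ((x + θ) * stdPdf (x + θ))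
      = (x * Real.tanh (θ * x) - θ) * gmod θ x := by
  obtain ⟨hA, hB⟩ := stdPdf_exp_form θ x
  set k := (Real.sqrt (2 * Real.pi))⁻¹ * Real.exp (-(x^2 + θ^2)/2) with hk
  have ht : Real.tanh (θ * x) =
      (Real.exp (θ*x) - Real.exp (-(θ*x))) / (Real.exp (θ*x) + Real.exp (-(θ*x))) := by
    rw [Real.tanh_eq_sinh_div_cosh, Real.sinh_eq, Real.cosh_eq]
    field_simp
  have hpos : 0 < Real.exp (θ*x) + Real.exp (-(θ*x)) :=
    add_pos (Real.exp_pos _) (Real.exp_pos _)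
  rw [gmod, hA, hB, ht]
  field_simp
  ring

lemma hasDerivAt_gmod (x θ : ℝ) :
    HasDerivAt (fun θ => gmod θ x) ((x * Real.tanh (θ * x) - θ) * gmod θ x) θ := by
  have hA : HasDerivAt (fun θ : ℝ => stdPdf (x - θ)) ((x - θ) * stdPdf (x - θ)) θ := by
    have h1 : HasDerivAt (fun θ : ℝ => x - θ) (-1) θ := by
      simpa using (hasDerivAt_id θ).const_sub x
    have h2 : HasDerivAt (fun θ : ℝ => -(x - θ) ^ 2 / 2) (x - θ) θ := by
      have := ((h1.pow 2).neg.div_const 2)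
      exact this.congr_deriv (by ring)
    have := (h2.exp.const_mul (Real.sqrt (2 * Real.pi))⁻¹)
    exact this.congr_deriv (by simp only [stdPdf]; ring)
  have hB : HasDerivAt (fun θ : ℝ => stdPdf (x + θ)) (-(x + θ) * stdPdf (x + θ)) θ := by
    have h1 : HasDerivAt (fun θ : ℝ => x + θ) 1 θ := by
      simpa using (hasDerivAt_id θ).const_add x
    have h2 : HasDerivAt (fun θ : ℝ => -(x + θ) ^ 2 / 2) (-(x + θ)) θ := by
      have := ((h1.pow 2).neg.div_const 2)
      exact this.congr_deriv (by ring)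
    have := (h2.exp.const_mul (Real.sqrt (2 * Real.pi))⁻¹)
    exact this.congr_deriv (by simp only [stdPdf]; ring)
  have := (hA.const_mul (1/2 : ℝ)).add (hB.const_mul (1/2 : ℝ))
  have h := this
  rw [show (1/2 : ℝ) * ((x - θ) * stdPdf (x - θ)) + (1/2) * (-(x + θ) * stdPdf (x + θ))
      = (x * Real.tanh (θ * x) - θ) * gmod θ x by
    rw [← gmod_deriv_identity θ x]; ring] at h
  exact h.congr_deriv rfl

lemma hasDerivAt_F (θs ρ x θ : ℝ) :
    HasDerivAt (fun θ => gstar θs ρ x * (Real.log (gstar θs ρ x) - Real.log (gmod θ x)))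
      (gstar θs ρ x * (θ - x * Real.tanh (θ * x))) θ := by
  have hlog : HasDerivAt (fun θ => Real.log (gmod θ x)) (x * Real.tanh (θ * x) - θ) θ := by
    have := (hasDerivAt_gmod x θ).log (gmod_pos θ x).ne'
    rwa [mul_div_assoc, div_self (gmod_pos θ x).ne', mul_one] at this
  have := (hlog.const_sub (Real.log (gstar θs ρ x))).const_mul (gstar θs ρ x)
  exact this.congr_deriv (by ring)

/- ### bound on |log| terms -/

lemma abs_log_gstar_le (θs ρ x : ℝ) :
    |Real.log (gstar θs ρ x)| ≤
      Real.log 2 + Real.log (Real.sqrt (2 * Real.pi)) + (x - θs) ^ 2 / 2 := by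
  have hc : 0 ≤ Real.log (Real.sqrt (2 * Real.pi)) := Real.log_nonneg one_le_sqrt2pi
  have h2 : 0 ≤ Real.log 2 := Real.log_nonneg one_le_two
  rw [abs_le]
  constructor
  · have hlb : (1/2 : ℝ) * stdPdf (x - θs) ≤ gstar θs ρ x := by
      have h1 := stdPdf_pos (x - θs * (-ρ - 1))
      have h3 := stdPdf_pos (x - θs * (ρ - 1))
      unfold gstar; linarith
    have := Real.log_le_log
      (by have := stdPdf_pos (x - θs); linarith) hlb
    rw [Real.log_mul (by norm_num) (stdPdf_pos _).ne', log_stdPdf] at this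
    have h12 : Real.log (1/2 : ℝ) = -Real.log 2 := by
      rw [one_div, Real.log_inv]
    rw [h12] at this
    linarith
  · have := Real.log_nonpos (gstar_pos θs ρ x).le (gstar_le_one θs ρ x)
    nlinarith [sq_nonneg (x - θs)]

lemma abs_log_gmod_le (θ x : ℝ) :
    |Real.log (gmod θ x)| ≤
      Real.log 2 + Real.log (Real.sqrt (2 * Real.pi)) + (x - θ) ^ 2 / 2 := by
  have hc : 0 ≤ Real.log (Real.sqrt (2 * Real.pi)) := Real.log_nonneg one_le_sqrt2pi
  have h2 : 0 ≤ Real.log 2 := Real.log_nonneg one_le_two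
  rw [abs_le]
  constructor
  · have hlb : (1/2 : ℝ) * stdPdf (x - θ) ≤ gmod θ x := by
      have h1 := stdPdf_pos (x + θ)
      unfold gmod; linarith
    have := Real.log_le_log
      (by have := stdPdf_pos (x - θ); linarith) hlb
    rw [Real.log_mul (by norm_num) (stdPdf_pos _).ne', log_stdPdf] at this
    have h12 : Real.log (1/2 : ℝ) = -Real.log 2 := by
      rw [one_div, Real.log_inv]
    rw [h12] at this
    linarith
  · have := Real.log_nonpos (gmod_pos θ x).le (gmod_le_one θ x)
    nlinarith [sq_nonneg (x - θ)]

/- ### main theorem -/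

/-- Any `θ̄ > 0` that is a local minimizer of `θ ↦ KL(g* ‖ g_θ)` is a fixed point of
the population EM operator: `E_{X∼g*}[X tanh(θ̄ X)] = θ̄`. -/
theorem local_min_kl_is_em_fixed_point (θs : ℝ) (hθs : θs ≠ 0) (ρ : ℝ) (hρ : 0 ≤ ρ)
    (θbar : ℝ) (hθbar : 0 < θbar) (hmin : IsLocalMin (fun θ => klg θs ρ θ) θbar) :
    Mpop θs ρ θbar = θbar := by
  set F : ℝ → ℝ → ℝ :=
    fun θ x => gstar θs ρ x * (Real.log (gstar θs ρ x) - Real.log (gmod θ x)) with hF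
  set F' : ℝ → ℝ → ℝ := fun θ x => gstar θs ρ x * (θ - x * Real.tanh (θ * x)) with hF'
  -- klg equals integral of F
  have hklg : ∀ θ, klg θs ρ θ = ∫ x, F θ x := by
    intro θ
    unfold klg
    congr 1
    funext x
    rw [Real.log_div (gstar_pos θs ρ x).ne' (gmod_pos θ x).ne']
  -- measurability
  have hFmeas : ∀ θ : ℝ, AEStronglyMeasurable (F θ) volume := by
    intro θ
    apply Continuous.aestronglyMeasurable
    exact (continuous_gstar θs ρ).mul
      (((continuous_gstar θs ρ).log fun x => (gstar_pos θs ρ x).ne').sub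
        ((continuous_gmod_x θ).log fun x => (gmod_pos θ x).ne'))
  have hF'meas : AEStronglyMeasurable (F' θbar) volume := by
    apply Continuous.aestronglyMeasurable
    exact (continuous_gstar θs ρ).mul (continuous_const.sub
      (continuous_id.mul (continuous_tanh.comp (continuous_const.mul continuous_id))))
  -- integrability of F θbar
  set K : ℝ := 2 * Real.log 2 + 2 * Real.log (Real.sqrt (2 * Real.pi))
      + θs ^ 2 + θbar ^ 2 + 2 with hK
  have hFint : Integrable (F θbar) volume := by
    apply Integrable.mono' ((integrable_quad_gstar θs ρ).const_mul K) (hFmeas θbar)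
    filter_upwards with x
    have hg := gstar_pos θs ρ x
    have h1 := abs_log_gstar_le θs ρ x
    have h2 := abs_log_gmod_le θbar x
    have hc : 0 ≤ Real.log (Real.sqrt (2 * Real.pi)) := Real.log_nonneg one_le_sqrt2pi
    have h2' : 0 ≤ Real.log 2 := Real.log_nonneg one_le_two
    have habs : |Real.log (gstar θs ρ x) - Real.log (gmod θbar x)| ≤ K * (1 + x ^ 2) := by
      calc |Real.log (gstar θs ρ x) - Real.log (gmod θbar x)|
          ≤ |Real.log (gstar θs ρ x)| + |Real.log (gmod θbar x)| := abs_sub _ _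
        _ ≤ K * (1 + x ^ 2) := by
            have hbase : (0:ℝ) ≤ 2 * Real.log 2 + 2 * Real.log (Real.sqrt (2 * Real.pi))
                + θs ^ 2 + θbar ^ 2 := by nlinarith [sq_nonneg θs, sq_nonneg θbar]
            have hb1 : (x - θs) ^ 2 / 2 ≤ x ^ 2 + θs ^ 2 := by nlinarith [sq_nonneg (x + θs)]
            have hb2 : (x - θbar) ^ 2 / 2 ≤ x ^ 2 + θbar ^ 2 := by
              nlinarith [sq_nonneg (x + θbar)]
            have := mul_nonneg hbase (sq_nonneg x)
            simp only [hK]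
            nlinarith [sq_nonneg x]
    rw [Real.norm_eq_abs, hF, abs_mul, abs_of_pos hg]
    calc gstar θs ρ x * |Real.log (gstar θs ρ x) - Real.log (gmod θbar x)|
        ≤ gstar θs ρ x * (K * (1 + x ^ 2)) := mul_le_mul_of_nonneg_left habs hg.le
      _ = K * ((1 + x ^ 2) * gstar θs ρ x) := by ring
  -- uniform bound for F' on ball θbar 1
  have hbound_int : Integrable (fun x => (|θbar| + 2) * ((1 + x ^ 2) * gstar θs ρ x)) volume :=
    (integrable_quad_gstar θs ρ).const_mul _
  have hbound : ∀ᵐ x ∂(volume : Measure ℝ), ∀ θ ∈ Metric.ball θbar 1,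
      ‖F' θ x‖ ≤ (|θbar| + 2) * ((1 + x ^ 2) * gstar θs ρ x) := by
    filter_upwards with x θ hθ
    have hg := gstar_pos θs ρ x
    have hθ' : |θ| ≤ |θbar| + 1 := by
      have := Metric.mem_ball.mp hθ
      rw [Real.dist_eq] at this
      have h := abs_sub_abs_le_abs_sub θ θbar
      linarith
    have htanh := abs_tanh_le_one (θ * x)
    rw [Real.norm_eq_abs, hF', abs_mul, abs_of_pos hg]
    have hx : |θ - x * Real.tanh (θ * x)| ≤ |θ| + |x| := by
      calc |θ - x * Real.tanh (θ * x)| ≤ |θ| + |x * Real.tanh (θ * x)| := abs_sub _ _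
        _ ≤ |θ| + |x| := by
            rw [abs_mul]
            nlinarith [abs_nonneg x]
    calc gstar θs ρ x * |θ - x * Real.tanh (θ * x)|
        ≤ gstar θs ρ x * ((|θbar| + 2) * (1 + x ^ 2)) := by
          apply mul_le_mul_of_nonneg_left _ hg.le
          have := sq_abs x
          nlinarith [abs_nonneg x, abs_nonneg θbar, sq_nonneg (|x| - 1)]
      _ = (|θbar| + 2) * ((1 + x ^ 2) * gstar θs ρ x) := by ring
  have hdiff : ∀ᵐ x ∂(volume : Measure ℝ), ∀ θ ∈ Metric.ball θbar 1,
      HasDerivAt (fun θ => F θ x) (F' θ x) θ := by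
    filter_upwards with x θ _
    exact hasDerivAt_F θs ρ x θ
  obtain ⟨hF'int, hderiv⟩ :=
    hasDerivAt_integral_of_dominated_loc_of_deriv_le (Metric.ball_mem_nhds θbar one_pos)
      (Filter.Eventually.of_forall fun θ => hFmeas θ) hFint hF'meas hbound hbound_int hdiff
  -- the derivative of klg at θbar is zero
  have hklgderiv : HasDerivAt (fun θ => klg θs ρ θ) (∫ x, F' θbar x) θbar := by
    have : (fun θ => klg θs ρ θ) = fun θ => ∫ x, F θ x := funext hklg
    rw [this]
    exact hderiv
  have hzero : (∫ x, F' θbar x) = 0 := hmin.hasDerivAt_eq_zero hklgderiv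
  -- compute the integral of F'
  have hint_mul : Integrable (fun x => gstar θs ρ x * (x * Real.tanh (θbar * x))) volume := by
    have := ((integrable_gstar θs ρ).const_mul θbar).sub hF'int
    exact this.congr (Filter.Eventually.of_forall fun x => by
      simp only [hF', Pi.sub_apply]; ring)
  have hsplit : (∫ x, F' θbar x)
      = θbar * (∫ x, gstar θs ρ x) - ∫ x, gstar θs ρ x * (x * Real.tanh (θbar * x)) := by
    rw [← integral_const_mul, ← integral_sub (((integrable_gstar θs ρ)).const_mul θbar) hint_mul]
    congr 1
    funext x
    simp only [hF']
    ring
  rw [hsplit, integral_gstar θs ρ, mul_one] at hzero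
  -- rewrite Mpop
  have hM : Mpop θs ρ θbar = ∫ x, gstar θs ρ x * (x * Real.tanh (θbar * x)) := by
    unfold Mpop gstarMeasure
    have hmeas : Measurable (fun x => Real.toNNReal (gstar θs ρ x)) :=
      (continuous_gstar θs ρ).measurable.real_toNNReal
    have hrw : (fun x => ENNReal.ofReal (gstar θs ρ x))
        = fun x => ((Real.toNNReal (gstar θs ρ x) : NNReal) : ENNReal) := rfl
    rw [hrw, integral_withDensity_eq_integral_smul hmeas]
    congr 1
    funext x
    rw [NNReal.smul_def, smul_eq_mul, Real.coe_toNNReal _ (gstar_pos θs ρ x).le]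
  rw [hM]
  linarith

end
end

section
/- The pseudo-true parameter converges to the true parameter as the component separation vanishes: for each ρ > 0, let θ̄(ρ) be any nonnegative minimizer of θ ↦ KL(g*_ρ ‖ g_θ); then θ̄(ρ) → |θ*| as ρ → 0⁺. (Equivalently, the neighborhood of θ* containing the KL projection shrinks as ρ decreases to zero.) -/
open MeasureTheory

noncomputable section

lemma stdPdf_def (x : ℝ) : stdPdf x = (Real.sqrt (2 * Real.pi))⁻¹ * Real.exp (-x ^ 2 / 2) := rfl

lemma continuous_gstar_s7 (θs : ℝ) : Continuous (fun p : ℝ × ℝ => gstar θs p.1 p.2) := by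
  unfold gstar
  have h := continuous_stdPdf
  fun_prop

lemma continuous_gstar_x (θs ρ : ℝ) : Continuous (fun x => gstar θs ρ x) := by
  unfold gstar
  have := continuous_stdPdf
  fun_prop

lemma stdPdf_shift (m x : ℝ) : stdPdf (x - m) = stdPdf x * Real.exp (m * x - m ^ 2 / 2) := by
  unfold stdPdf
  rw [mul_assoc, ← Real.exp_add]
  ring_nf

lemma stdPdf_even (x : ℝ) : stdPdf (-x) = stdPdf x := by
  unfold stdPdf; ring_nf

lemma gmod_eq (θ x : ℝ) : gmod θ x = stdPdf x * (Real.exp (-θ ^ 2 / 2) * Real.cosh (θ * x)) := by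
  unfold gmod
  have h1 : x + θ = x - (-θ) := by ring
  rw [h1, stdPdf_shift, stdPdf_shift, Real.cosh_eq]
  rw [show -θ * x - (-θ) ^ 2 / 2 = -(θ*x) + (-θ^2/2) by ring,
      show θ * x - θ ^ 2 / 2 = θ*x + (-θ^2/2) by ring, Real.exp_add, Real.exp_add]
  ring

lemma gmod_neg (θ x : ℝ) : gmod (-θ) x = gmod θ x := by
  unfold gmod
  have h1 : x - -θ = x + θ := by ring
  have h2 : x + -θ = x - θ := by ring
  rw [h1, h2]; ring

lemma gmod_abs (θ x : ℝ) : gmod |θ| x = gmod θ x := by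
  rcases abs_cases θ with ⟨h, _⟩ | ⟨h, _⟩
  · rw [h]
  · rw [h, gmod_neg]

lemma gstar_zero (θs x : ℝ) : gstar θs 0 x = gmod θs x := by
  unfold gstar gmod
  have h1 : θs * (-0 - 1) = -θs := by ring
  have h2 : θs * ((0:ℝ) - 1) = -θs := by ring
  rw [h1, h2]
  have h3 : x - -θs = x + θs := by ring
  rw [h3]; ring

/-- log cosh bounds -/
lemma logcosh_nonneg (t : ℝ) : 0 ≤ Real.log (Real.cosh t) :=
  Real.log_nonneg (Real.one_le_cosh t)

lemma cosh_le_exp_abs (t : ℝ) : Real.cosh t ≤ Real.exp |t| := by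
  rw [Real.cosh_eq]
  have h1 : Real.exp t ≤ Real.exp |t| := Real.exp_le_exp.2 (le_abs_self t)
  have h2 : Real.exp (-t) ≤ Real.exp |t| := Real.exp_le_exp.2 (neg_le_abs t)
  linarith

lemma logcosh_le (t : ℝ) : Real.log (Real.cosh t) ≤ |t| := by
  calc Real.log (Real.cosh t) ≤ Real.log (Real.exp |t|) :=
        Real.log_le_log (Real.cosh_pos t) (cosh_le_exp_abs t)
    _ = |t| := Real.log_exp _

lemma abs_logcosh_le (t : ℝ) : |Real.log (Real.cosh t)| ≤ |t| := by
  rw [abs_of_nonneg (logcosh_nonneg t)]; exact logcosh_le t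

/-- stdPdf shifted bounds -/
lemma stdPdf_shift_le (m x M : ℝ) (hm : |m| ≤ M) :
    stdPdf (x - m) ≤ stdPdf x * Real.exp (M * |x|) := by
  rw [stdPdf_shift]
  have h : m * x - m ^ 2 / 2 ≤ M * |x| := by
    have h1 : m * x ≤ |m| * |x| := by
      calc m * x ≤ |m * x| := le_abs_self _
        _ = |m| * |x| := abs_mul m x
    have h2 : |m| * |x| ≤ M * |x| := by
      apply mul_le_mul_of_nonneg_right hm (abs_nonneg x)
    nlinarith [sq_nonneg m]
  exact mul_le_mul_of_nonneg_left (Real.exp_le_exp.2 h) (stdPdf_pos x).le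

lemma stdPdf_shift_ge (m x M : ℝ) (hm : |m| ≤ M) :
    stdPdf x * Real.exp (-(M * |x|) - M ^ 2 / 2) ≤ stdPdf (x - m) := by
  rw [stdPdf_shift]
  have h : -(M * |x|) - M ^ 2 / 2 ≤ m * x - m ^ 2 / 2 := by
    have h1 : -(|m| * |x|) ≤ m * x := by
      have := neg_abs_le (m * x); rw [abs_mul] at this; linarith
    have h2 : -(M * |x|) ≤ -(|m| * |x|) := by
      have := mul_le_mul_of_nonneg_right hm (abs_nonneg x); linarith
    have h3 : m ^ 2 ≤ M ^ 2 := by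
      have := abs_nonneg m
      nlinarith [sq_abs m]
    linarith
  exact mul_le_mul_of_nonneg_left (Real.exp_le_exp.2 h) (stdPdf_pos x).le

/-- master integrable function -/
lemma integrable_linear_mul_gauss (c₁ c₂ M : ℝ) :
    Integrable (fun x : ℝ => (c₁ + c₂ * |x|) * Real.exp (M * |x| - x ^ 2 / 2)) := by
  have hbound : ∀ x : ℝ, ‖(c₁ + c₂ * |x|) * Real.exp (M * |x| - x ^ 2 / 2)‖ ≤
      (|c₁| + |c₂|) * Real.exp ((M + 1) ^ 2) * Real.exp (-(4:ℝ)⁻¹ * x ^ 2) := by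
    intro x
    have hx : |x| ≤ Real.exp |x| := (Real.add_one_le_exp |x|).trans' (by linarith [abs_nonneg x])
    have hexp : Real.exp ((M + 1) * |x| - x ^ 2 / 2)
        ≤ Real.exp ((M + 1) ^ 2) * Real.exp (-(4:ℝ)⁻¹ * x ^ 2) := by
      rw [← Real.exp_add]
      apply Real.exp_le_exp.2
      nlinarith [sq_nonneg (|x| / 2 - (M + 1)), sq_abs x]
    have e1 : (0:ℝ) < Real.exp (M * |x| - x ^ 2 / 2) := Real.exp_pos _
    have hprod : abs (c₁ + c₂ * |x|) * Real.exp (M * |x| - x ^ 2 / 2)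
        ≤ (|c₁| + |c₂|) * Real.exp ((M + 1) * |x| - x ^ 2 / 2) := by
      have h1 : abs (c₁ + c₂ * |x|) ≤ |c₁| + |c₂| * Real.exp |x| := by
        calc abs (c₁ + c₂ * |x|) ≤ |c₁| + abs (c₂ * |x|) := abs_add_le _ _
          _ = |c₁| + |c₂| * |x| := by rw [abs_mul, abs_abs]
          _ ≤ |c₁| + |c₂| * Real.exp |x| := by
              have := mul_le_mul_of_nonneg_left hx (abs_nonneg c₂); linarith
      have h2 : (|c₁| + |c₂| * Real.exp |x|) * Real.exp (M * |x| - x ^ 2 / 2)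
          ≤ (|c₁| + |c₂|) * Real.exp ((M + 1) * |x| - x ^ 2 / 2) := by
        have e2 : Real.exp (M * |x| - x ^ 2 / 2) ≤ Real.exp ((M + 1) * |x| - x ^ 2 / 2) := by
          apply Real.exp_le_exp.2; nlinarith [abs_nonneg x]
        have e3 : Real.exp |x| * Real.exp (M * |x| - x ^ 2 / 2)
            = Real.exp ((M + 1) * |x| - x ^ 2 / 2) := by
          rw [← Real.exp_add]; ring_nf
        have hc1 := abs_nonneg c₁
        have hc2 := abs_nonneg c₂
        nlinarith [mul_le_mul_of_nonneg_left e2 hc1]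
      exact (mul_le_mul_of_nonneg_right h1 e1.le).trans h2
    rw [norm_mul, Real.norm_eq_abs, Real.norm_eq_abs, Real.abs_exp]
    calc abs (c₁ + c₂ * |x|) * Real.exp (M * |x| - x ^ 2 / 2)
        ≤ (|c₁| + |c₂|) * Real.exp ((M + 1) * |x| - x ^ 2 / 2) := hprod
      _ ≤ (|c₁| + |c₂|) * (Real.exp ((M + 1) ^ 2) * Real.exp (-(4:ℝ)⁻¹ * x ^ 2)) := by
          apply mul_le_mul_of_nonneg_left hexp (by positivity)
      _ = (|c₁| + |c₂|) * Real.exp ((M + 1) ^ 2) * Real.exp (-(4:ℝ)⁻¹ * x ^ 2) := by ring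
  refine Integrable.mono' (((integrable_exp_neg_mul_sq (by norm_num : (0:ℝ) < 4⁻¹)).const_mul
      ((|c₁| + |c₂|) * Real.exp ((M + 1) ^ 2)))) ?_ (Filter.Eventually.of_forall hbound)
  apply Continuous.aestronglyMeasurable
  fun_prop

/-- comparison: anything dominated by linear × gaussian envelope is integrable -/
lemma integrable_of_le_envelope {f : ℝ → ℝ} (c₁ c₂ M : ℝ)
    (hf : AEStronglyMeasurable f volume)
    (h : ∀ x, ‖f x‖ ≤ (c₁ + c₂ * |x|) * Real.exp (M * |x| - x ^ 2 / 2)) :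
    Integrable f := by
  exact (integrable_linear_mul_gauss c₁ c₂ M).mono' hf (Filter.Eventually.of_forall h)

/-- the uniform mean bound -/
lemma mean_bounds (θs ρ : ℝ) :
    |θs * (-ρ - 1)| ≤ |θs| * (|ρ| + 1) ∧ |θs| ≤ |θs| * (|ρ| + 1)
      ∧ |θs * (ρ - 1)| ≤ |θs| * (|ρ| + 1) := by
  have h0 := abs_nonneg θs
  have h1 := abs_nonneg ρ
  refine ⟨?_, ?_, ?_⟩
  · rw [abs_mul]
    have h2 : |(-ρ - 1)| ≤ |ρ| + 1 := by
      have h3 := abs_sub (-ρ) 1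
      simp only [abs_neg] at h3
      simpa using h3
    nlinarith
  · nlinarith [mul_nonneg h0 h1]
  · rw [abs_mul]
    have h2 : |(ρ - 1)| ≤ |ρ| + 1 := by
      have h3 := abs_sub ρ 1
      simpa using h3
    nlinarith
lemma gstar_le (θs ρ x : ℝ) {M : ℝ} (hM : |θs| * (|ρ| + 1) ≤ M) :
    gstar θs ρ x ≤ stdPdf x * Real.exp (M * |x|) := by
  obtain ⟨h1, h2, h3⟩ := mean_bounds θs ρ
  unfold gstar
  have b1 := stdPdf_shift_le (θs * (-ρ - 1)) x M (h1.trans hM)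
  have b2 := stdPdf_shift_le θs x M (h2.trans hM)
  have b3 := stdPdf_shift_le (θs * (ρ - 1)) x M (h3.trans hM)
  linarith

lemma gstar_ge (θs ρ x : ℝ) {M : ℝ} (hM : |θs| * (|ρ| + 1) ≤ M) :
    (1 / 2) * (stdPdf x * Real.exp (-(M * |x|) - M ^ 2 / 2)) ≤ gstar θs ρ x := by
  obtain ⟨h1, h2, h3⟩ := mean_bounds θs ρ
  unfold gstar
  have b2 := stdPdf_shift_ge θs x M (h2.trans hM)
  have p1 := stdPdf_pos (x - θs * (-ρ - 1))
  have p3 := stdPdf_pos (x - θs * (ρ - 1))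
  linarith

lemma abs_log_ratio_le (θs ρ x : ℝ) {M : ℝ} (hM : |θs| * (|ρ| + 1) ≤ M) :
    |Real.log (gstar θs ρ x / stdPdf x)| ≤ (M ^ 2 / 2 + Real.log 2) + M * |x| := by
  have hs := stdPdf_pos x
  have hg := gstar_pos θs ρ x
  have hub : Real.log (gstar θs ρ x / stdPdf x) ≤ M * |x| := by
    have h := gstar_le θs ρ x hM
    have : gstar θs ρ x / stdPdf x ≤ Real.exp (M * |x|) := by
      rw [div_le_iff₀ hs]; linarith [h, mul_comm (stdPdf x) (Real.exp (M * |x|))]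
    calc Real.log (gstar θs ρ x / stdPdf x) ≤ Real.log (Real.exp (M * |x|)) :=
          Real.log_le_log (by positivity) this
      _ = M * |x| := Real.log_exp _
  have hlb : -(M ^ 2 / 2 + Real.log 2) - M * |x| ≤ Real.log (gstar θs ρ x / stdPdf x) := by
    have h := gstar_ge θs ρ x hM
    have h2 : (1 / 2) * Real.exp (-(M * |x|) - M ^ 2 / 2) ≤ gstar θs ρ x / stdPdf x := by
      rw [le_div_iff₀ hs]; nlinarith
    calc -(M ^ 2 / 2 + Real.log 2) - M * |x|
        = Real.log ((1 / 2) * Real.exp (-(M * |x|) - M ^ 2 / 2)) := by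
          rw [Real.log_mul (by norm_num) (Real.exp_ne_zero _), Real.log_exp,
            show (1:ℝ)/2 = 2⁻¹ by norm_num, Real.log_inv]
          ring
      _ ≤ Real.log (gstar θs ρ x / stdPdf x) := Real.log_le_log (by positivity) h2
  have hlog2 : (0:ℝ) ≤ Real.log 2 := (Real.log_pos (by norm_num)).le
  have hM2 : (0:ℝ) ≤ M ^ 2 / 2 := by positivity
  rw [abs_le]
  constructor <;> linarith

/-- integrability of gstar times linearly bounded measurable function -/
lemma integrable_gstar_mul (θs ρ : ℝ) {f : ℝ → ℝ} (hf : AEStronglyMeasurable f volume)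
    {a b : ℝ} (hb : ∀ x, |f x| ≤ a + b * |x|) :
    Integrable (fun x => gstar θs ρ x * f x) := by
  set M := |θs| * (|ρ| + 1) with hMdef
  have hM : |θs| * (|ρ| + 1) ≤ M := le_refl _
  have hK : (0:ℝ) < (Real.sqrt (2 * Real.pi))⁻¹ := by
    have := Real.pi_pos
    have : (0:ℝ) < Real.sqrt (2 * Real.pi) := Real.sqrt_pos.2 (by linarith)
    positivity
  have hm : AEStronglyMeasurable (fun x => gstar θs ρ x * f x) volume :=
    ((continuous_gstar_x θs ρ).aestronglyMeasurable).mul hf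
  apply integrable_of_le_envelope ((Real.sqrt (2 * Real.pi))⁻¹ * a)
    ((Real.sqrt (2 * Real.pi))⁻¹ * b) M hm
  intro x
  rw [norm_mul, Real.norm_eq_abs, Real.norm_eq_abs,
    abs_of_pos (gstar_pos θs ρ x)]
  have h1 : gstar θs ρ x ≤ (Real.sqrt (2 * Real.pi))⁻¹ * Real.exp (M * |x| - x ^ 2 / 2) := by
    have := gstar_le θs ρ x hM
    rw [stdPdf_def] at this
    calc gstar θs ρ x ≤ (Real.sqrt (2 * Real.pi))⁻¹ * Real.exp (-x ^ 2 / 2) * Real.exp (M * |x|) := this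
      _ = (Real.sqrt (2 * Real.pi))⁻¹ * Real.exp (M * |x| - x ^ 2 / 2) := by
          rw [mul_assoc, ← Real.exp_add]; ring_nf
  have h2 := hb x
  have hg := (gstar_pos θs ρ x).le
  have hfa := abs_nonneg (f x)
  calc gstar θs ρ x * |f x|
      ≤ ((Real.sqrt (2 * Real.pi))⁻¹ * Real.exp (M * |x| - x ^ 2 / 2)) * (a + b * |x|) := by
        apply mul_le_mul h1 h2 hfa
        positivity
    _ = ((Real.sqrt (2 * Real.pi))⁻¹ * a + (Real.sqrt (2 * Real.pi))⁻¹ * b * |x|)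
        * Real.exp (M * |x| - x ^ 2 / 2) := by ring

lemma integrable_gstar_logratio (θs ρ : ℝ) :
    Integrable (fun x => gstar θs ρ x * Real.log (gstar θs ρ x / stdPdf x)) := by
  set M := |θs| * (|ρ| + 1) with hMdef
  have hmeas : AEStronglyMeasurable (fun x => Real.log (gstar θs ρ x / stdPdf x)) volume := by
    apply Continuous.aestronglyMeasurable
    apply Continuous.log
    · exact (continuous_gstar_x θs ρ).div continuous_stdPdf (fun x => (stdPdf_pos x).ne')
    · intro x
      exact (div_pos (gstar_pos θs ρ x) (stdPdf_pos x)).ne'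
  exact integrable_gstar_mul θs ρ hmeas (a := M ^ 2 / 2 + Real.log 2) (b := M)
    (fun x => abs_log_ratio_le θs ρ x (le_refl _))

lemma integrable_gstar_logcosh (θs ρ θ : ℝ) :
    Integrable (fun x => gstar θs ρ x * Real.log (Real.cosh (θ * x))) := by
  have hmeas : AEStronglyMeasurable (fun x => Real.log (Real.cosh (θ * x))) volume := by
    apply Continuous.aestronglyMeasurable
    apply Continuous.log
    · fun_prop
    · intro x; exact (Real.cosh_pos _).ne'
  refine integrable_gstar_mul θs ρ hmeas (a := 0) (b := |θ|) (fun x => ?_)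
  calc |Real.log (Real.cosh (θ * x))| ≤ |θ * x| := abs_logcosh_le _
    _ = 0 + |θ| * |x| := by rw [abs_mul]; ring

/-- the key decomposition -/
lemma klg_eq (θs ρ θ : ℝ) :
    klg θs ρ θ = (∫ x, gstar θs ρ x * Real.log (gstar θs ρ x / stdPdf x)) + θ ^ 2 / 2
      - ∫ x, gstar θs ρ x * Real.log (Real.cosh (θ * x)) := by
  unfold klg
  have hpt : ∀ x, gstar θs ρ x * Real.log (gstar θs ρ x / gmod θ x)
      = gstar θs ρ x * Real.log (gstar θs ρ x / stdPdf x)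
        + gstar θs ρ x * (θ ^ 2 / 2)
        - gstar θs ρ x * Real.log (Real.cosh (θ * x)) := by
    intro x
    have hs := stdPdf_pos x
    have hg := gstar_pos θs ρ x
    have hc := Real.cosh_pos (θ * x)
    have he := Real.exp_pos (-θ ^ 2 / 2)
    rw [gmod_eq]
    rw [Real.log_div hg.ne' (by positivity), Real.log_div hg.ne' hs.ne',
      Real.log_mul hs.ne' (by positivity), Real.log_mul he.ne' hc.ne', Real.log_exp]
    ring
  simp_rw [hpt]
  have I1 : Integrable (fun x => gstar θs ρ x * Real.log (gstar θs ρ x / stdPdf x)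
      + gstar θs ρ x * (θ ^ 2 / 2)) :=
    (integrable_gstar_logratio θs ρ).add ((integrable_gstar θs ρ).mul_const _)
  rw [integral_sub I1 (integrable_gstar_logcosh θs ρ θ),
    integral_add (integrable_gstar_logratio θs ρ) ((integrable_gstar θs ρ).mul_const _),
    integral_mul_const, integral_gstar]
  ring

lemma continuous_gmod (θ : ℝ) : Continuous (fun x => gmod θ x) := by
  unfold gmod
  have := continuous_stdPdf
  fun_prop

lemma integrable_gmod (θ : ℝ) : Integrable (fun x => gmod θ x) := by
  unfold gmod
  exact ((integrable_stdPdf.comp_sub_right θ).const_mul _).add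
    (((integrable_stdPdf.comp_sub_right (-θ)).congr
      (Filter.Eventually.of_forall (fun x => by simp only [sub_neg_eq_add]))).const_mul _)

lemma integral_gmod (θ : ℝ) : ∫ x, gmod θ x = 1 := by
  unfold gmod
  have i1 : Integrable (fun x => stdPdf (x - θ)) := integrable_stdPdf.comp_sub_right θ
  have i2 : Integrable (fun x => stdPdf (x + θ)) :=
    (integrable_stdPdf.comp_sub_right (-θ)).congr
      (Filter.Eventually.of_forall (fun x => by simp only [sub_neg_eq_add]))
  rw [integral_add (i1.const_mul _) (i2.const_mul _), integral_const_mul, integral_const_mul,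
    integral_sub_right_eq_self stdPdf]
  have h2 : ∫ x, stdPdf (x + θ) = ∫ x, stdPdf x := by
    rw [← integral_sub_right_eq_self (fun x => stdPdf (x + θ)) θ]
    congr 1; funext x; rw [sub_add_cancel]
  rw [h2, integral_stdPdf]
  norm_num

/-- integrand of klg is integrable -/
lemma integrable_klg_integrand (θs ρ θ : ℝ) :
    Integrable (fun x => gstar θs ρ x * Real.log (gstar θs ρ x / gmod θ x)) := by
  have hpt : ∀ x, gstar θs ρ x * Real.log (gstar θs ρ x / gmod θ x)
      = gstar θs ρ x * Real.log (gstar θs ρ x / stdPdf x)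
        + gstar θs ρ x * (θ ^ 2 / 2)
        - gstar θs ρ x * Real.log (Real.cosh (θ * x)) := by
    intro x
    have hs := stdPdf_pos x
    have hg := gstar_pos θs ρ x
    have hc := Real.cosh_pos (θ * x)
    have he := Real.exp_pos (-θ ^ 2 / 2)
    rw [gmod_eq]
    rw [Real.log_div hg.ne' (by positivity), Real.log_div hg.ne' hs.ne',
      Real.log_mul hs.ne' (by positivity), Real.log_mul he.ne' hc.ne', Real.log_exp]
    ring
  have : Integrable (fun x => gstar θs ρ x * Real.log (gstar θs ρ x / stdPdf x)
        + gstar θs ρ x * (θ ^ 2 / 2) - gstar θs ρ x * Real.log (Real.cosh (θ * x))) :=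
    ((integrable_gstar_logratio θs ρ).add ((integrable_gstar θs ρ).mul_const _)).sub
      (integrable_gstar_logcosh θs ρ θ)
  exact this.congr (Filter.Eventually.of_forall (fun x => (hpt x).symm))

/-- pointwise Gibbs -/
lemma gibbs_pointwise (θs ρ θ x : ℝ) :
    gstar θs ρ x - gmod θ x ≤ gstar θs ρ x * Real.log (gstar θs ρ x / gmod θ x) := by
  have hf := gstar_pos θs ρ x
  have hg := gmod_pos θ x
  have ht : (0:ℝ) < gmod θ x / gstar θs ρ x := by positivity
  have h1 : Real.log (gmod θ x / gstar θs ρ x) ≤ gmod θ x / gstar θs ρ x - 1 :=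
    Real.log_le_sub_one_of_pos ht
  have h2 : Real.log (gstar θs ρ x / gmod θ x) = -Real.log (gmod θ x / gstar θs ρ x) := by
    rw [Real.log_div hf.ne' hg.ne', Real.log_div hg.ne' hf.ne']; ring
  rw [h2]
  have h3 : gstar θs ρ x * (gmod θ x / gstar θs ρ x - 1) = gmod θ x - gstar θs ρ x := by
    field_simp
  nlinarith [mul_le_mul_of_nonneg_left h1 hf.le]

lemma klg_nonneg (θs ρ θ : ℝ) : 0 ≤ klg θs ρ θ := by
  unfold klg
  have key : ∫ x, (gstar θs ρ x - gmod θ x) ≤ ∫ x, gstar θs ρ x * Real.log (gstar θs ρ x / gmod θ x) := by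
    apply integral_mono ((integrable_gstar θs ρ).sub (integrable_gmod θ))
      (integrable_klg_integrand θs ρ θ)
    exact fun x => gibbs_pointwise θs ρ θ x
  rw [integral_sub (integrable_gstar θs ρ) (integrable_gmod θ), integral_gstar, integral_gmod] at key
  linarith

lemma klg_zero_self (θs : ℝ) : klg θs 0 |θs| = 0 := by
  unfold klg
  have h : ∀ x, gstar θs 0 x * Real.log (gstar θs 0 x / gmod |θs| x) = 0 := by
    intro x
    rw [gmod_abs, ← gstar_zero, div_self (gstar_pos θs 0 x).ne', Real.log_one, mul_zero]
  simp_rw [h, integral_zero]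

/-- equality case: klg θs 0 θ = 0 → θ = θs ∨ θ = -θs -/
lemma klg_zero_eq_case (θs θ : ℝ) (h : klg θs 0 θ = 0) : θ = θs ∨ θ = -θs := by
  have hfg : ∀ x, gstar θs 0 x = gmod θ x := by
    have hnn : ∀ x, 0 ≤ gstar θs 0 x * Real.log (gstar θs 0 x / gmod θ x)
        - (gstar θs 0 x - gmod θ x) := fun x => by
      have := gibbs_pointwise θs 0 θ x; linarith
    have hB : Integrable (fun x => gstar θs 0 x - gmod θ x) :=
      (integrable_gstar θs 0).sub (integrable_gmod θ)
    have hint : Integrable (fun x => gstar θs 0 x * Real.log (gstar θs 0 x / gmod θ x)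
        - (gstar θs 0 x - gmod θ x)) := (integrable_klg_integrand θs 0 θ).sub hB
    have hzero : ∫ x, (gstar θs 0 x * Real.log (gstar θs 0 x / gmod θ x)
        - (gstar θs 0 x - gmod θ x)) = 0 := by
      rw [integral_sub (integrable_klg_integrand θs 0 θ) hB,
        integral_sub (integrable_gstar θs 0) (integrable_gmod θ),
        integral_gstar, integral_gmod]
      have : (∫ x, gstar θs 0 x * Real.log (gstar θs 0 x / gmod θ x)) = klg θs 0 θ := rfl
      rw [this, h]; ring
    have hae := (integral_eq_zero_iff_of_nonneg (fun x => hnn x) hint).1 hzero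
    have hcont : Continuous (fun x => gstar θs 0 x * Real.log (gstar θs 0 x / gmod θ x)
        - (gstar θs 0 x - gmod θ x)) := by
      apply Continuous.sub
      · apply Continuous.mul (continuous_gstar_x θs 0)
        apply Continuous.log
        · exact (continuous_gstar_x θs 0).div (continuous_gmod θ) (fun x => (gmod_pos θ x).ne')
        · intro x; exact (div_pos (gstar_pos θs 0 x) (gmod_pos θ x)).ne'
      · exact (continuous_gstar_x θs 0).sub (continuous_gmod θ)
    have heq := (Continuous.ae_eq_iff_eq volume hcont continuous_const).1 hae
    intro x
    have hx : gstar θs 0 x * Real.log (gstar θs 0 x / gmod θ x)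
        - (gstar θs 0 x - gmod θ x) = 0 := by
      have := congrFun heq x
      exact this
    have hf := gstar_pos θs 0 x
    have hg := gmod_pos θ x
    by_contra hne
    have ht : (0:ℝ) < gmod θ x / gstar θs 0 x := by positivity
    have htne : gmod θ x / gstar θs 0 x ≠ 1 := by
      intro h1
      apply hne
      field_simp at h1
      exact h1.symm
    have hlt : Real.log (gmod θ x / gstar θs 0 x) < gmod θ x / gstar θs 0 x - 1 :=
      Real.log_lt_sub_one_of_pos ht htne
    have h2 : Real.log (gstar θs 0 x / gmod θ x) = -Real.log (gmod θ x / gstar θs 0 x) := by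
      rw [Real.log_div hf.ne' hg.ne', Real.log_div hg.ne' hf.ne']; ring
    have h3 : gstar θs 0 x * (gmod θ x / gstar θs 0 x - 1) = gmod θ x - gstar θs 0 x := by
      field_simp
    nlinarith [mul_lt_mul_of_pos_left hlt hf]
  -- evaluate at 0
  have h0 := hfg 0
  rw [gstar_zero] at h0
  have hval : ∀ a : ℝ, gmod a 0 = stdPdf a := by
    intro a
    unfold gmod
    rw [zero_sub, zero_add, stdPdf_even]
    ring
  rw [hval, hval] at h0
  rw [stdPdf_def, stdPdf_def] at h0
  have hK : (Real.sqrt (2 * Real.pi))⁻¹ ≠ 0 := by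
    have hpi := Real.pi_pos
    have : (0:ℝ) < Real.sqrt (2 * Real.pi) := Real.sqrt_pos.2 (by linarith)
    positivity
  have hexp : Real.exp (-θs ^ 2 / 2) = Real.exp (-θ ^ 2 / 2) :=
    mul_left_cancel₀ hK h0
  have hsq : θ ^ 2 = θs ^ 2 := by
    have := Real.exp_injective hexp
    linarith [this]
  have hzz : (θ - θs) * (θ + θs) = 0 := by nlinarith
  rcases mul_eq_zero.1 hzz with h1 | h1
  · left; linarith
  · right; linarith

-- abbreviations
local notation "K" => (Real.sqrt (2 * Real.pi))⁻¹

lemma gstar_le_env (θs ρ x : ℝ) (hρ : |ρ| ≤ 1) :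
    gstar θs ρ x ≤ K * Real.exp (2 * |θs| * |x| - x ^ 2 / 2) := by
  have hM : |θs| * (|ρ| + 1) ≤ 2 * |θs| := by nlinarith [abs_nonneg θs, abs_nonneg ρ]
  have h := gstar_le θs ρ x hM
  rw [stdPdf_def] at h
  calc gstar θs ρ x ≤ K * Real.exp (-x ^ 2 / 2) * Real.exp (2 * |θs| * |x|) := h
    _ = K * Real.exp (2 * |θs| * |x| - x ^ 2 / 2) := by
        rw [mul_assoc, ← Real.exp_add]; ring_nf

/-- uniform moment constant -/
def Cmom (θs : ℝ) : ℝ := ∫ x : ℝ, (K * |x|) * Real.exp (2 * |θs| * |x| - x ^ 2 / 2)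

lemma integrable_Cmom_integrand (θs : ℝ) :
    Integrable (fun x : ℝ => (K * |x|) * Real.exp (2 * |θs| * |x| - x ^ 2 / 2)) := by
  have := integrable_linear_mul_gauss 0 K (2 * |θs|)
  apply this.congr
  filter_upwards [] with x
  ring_nf

lemma Cmom_nonneg (θs : ℝ) : 0 ≤ Cmom θs := by
  unfold Cmom
  apply integral_nonneg
  intro x
  have hK : (0:ℝ) ≤ K := by positivity
  have := abs_nonneg x
  positivity

lemma T_nonneg (θs ρ θ : ℝ) : 0 ≤ ∫ x, gstar θs ρ x * Real.log (Real.cosh (θ * x)) := by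
  apply integral_nonneg
  intro x
  exact mul_nonneg (gstar_pos θs ρ x).le (logcosh_nonneg _)

lemma T_le (θs ρ θ : ℝ) (hρ : |ρ| ≤ 1) :
    ∫ x, gstar θs ρ x * Real.log (Real.cosh (θ * x)) ≤ |θ| * Cmom θs := by
  have hpt : ∀ x, gstar θs ρ x * Real.log (Real.cosh (θ * x))
      ≤ |θ| * ((K * |x|) * Real.exp (2 * |θs| * |x| - x ^ 2 / 2)) := by
    intro x
    have h1 : Real.log (Real.cosh (θ * x)) ≤ |θ| * |x| := by
      have := abs_logcosh_le (θ * x)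
      have h2 := le_abs_self (Real.log (Real.cosh (θ * x)))
      rw [abs_mul] at this
      linarith
    have h3 := gstar_le_env θs ρ x hρ
    have hg := (gstar_pos θs ρ x).le
    have hlc := logcosh_nonneg (θ * x)
    have he : (0:ℝ) ≤ Real.exp (2 * |θs| * |x| - x ^ 2 / 2) := (Real.exp_pos _).le
    have hK : (0:ℝ) ≤ K := by positivity
    calc gstar θs ρ x * Real.log (Real.cosh (θ * x))
        ≤ (K * Real.exp (2 * |θs| * |x| - x ^ 2 / 2)) * (|θ| * |x|) := by
          apply mul_le_mul h3 h1 hlc (by positivity)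
      _ = |θ| * ((K * |x|) * Real.exp (2 * |θs| * |x| - x ^ 2 / 2)) := by ring
  calc ∫ x, gstar θs ρ x * Real.log (Real.cosh (θ * x))
      ≤ ∫ x, |θ| * ((K * |x|) * Real.exp (2 * |θs| * |x| - x ^ 2 / 2)) :=
        integral_mono (integrable_gstar_logcosh θs ρ θ)
          ((integrable_Cmom_integrand θs).const_mul _) hpt
    _ = |θ| * Cmom θs := by rw [integral_const_mul]; rfl

set_option maxHeartbeats 1000000 in
/-- dominated convergence for T along sequences -/
lemma T_tendsto (θs B : ℝ) (ρn θn : ℕ → ℝ) (t : ℝ)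
    (hρ1 : ∀ n, |ρn n| ≤ 1) (hθB : ∀ n, |θn n| ≤ B)
    (hρ0 : Filter.Tendsto ρn Filter.atTop (nhds 0))
    (hθt : Filter.Tendsto θn Filter.atTop (nhds t)) :
    Filter.Tendsto (fun n => ∫ x, gstar θs (ρn n) x * Real.log (Real.cosh (θn n * x)))
      Filter.atTop (nhds (∫ x, gstar θs 0 x * Real.log (Real.cosh (t * x)))) := by
  apply tendsto_integral_of_dominated_convergence
    (fun x => (0 + (K * B) * |x|) * Real.exp (2 * |θs| * |x| - x ^ 2 / 2))
  · intro n
    apply Continuous.aestronglyMeasurable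
    apply Continuous.mul (continuous_gstar_x θs (ρn n))
    apply Continuous.log
    · fun_prop
    · intro x; exact (Real.cosh_pos _).ne'
  · exact integrable_linear_mul_gauss 0 (K * B) (2 * |θs|)
  · intro n
    filter_upwards [] with x
    rw [Real.norm_eq_abs, abs_mul, abs_of_pos (gstar_pos θs (ρn n) x)]
    have h1 : |Real.log (Real.cosh (θn n * x))| ≤ B * |x| := by
      have h := abs_logcosh_le (θn n * x)
      rw [abs_mul] at h
      have h2 : |θn n| * |x| ≤ B * |x| := mul_le_mul_of_nonneg_right (hθB n) (abs_nonneg x)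
      linarith
    have h3 := gstar_le_env θs (ρn n) x (hρ1 n)
    have hg := (gstar_pos θs (ρn n) x).le
    have hK : (0:ℝ) ≤ K := by positivity
    calc gstar θs (ρn n) x * |Real.log (Real.cosh (θn n * x))|
        ≤ (K * Real.exp (2 * |θs| * |x| - x ^ 2 / 2)) * (B * |x|) := by
          apply mul_le_mul h3 h1 (abs_nonneg _) (by positivity)
      _ = (0 + (K * B) * |x|) * Real.exp (2 * |θs| * |x| - x ^ 2 / 2) := by ring
  · filter_upwards [] with x
    have hc1 : Continuous (fun r : ℝ => gstar θs r x) := by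
      unfold gstar
      have := continuous_stdPdf
      fun_prop
    have hc2 : Continuous (fun u : ℝ => Real.log (Real.cosh (u * x))) := by
      apply Continuous.log
      · fun_prop
      · intro u; exact (Real.cosh_pos _).ne'
    have t1 : Filter.Tendsto (fun n => gstar θs (ρn n) x) Filter.atTop
        (nhds (gstar θs 0 x)) := (hc1.tendsto 0).comp hρ0
    have t2 : Filter.Tendsto (fun n => Real.log (Real.cosh (θn n * x))) Filter.atTop
        (nhds (Real.log (Real.cosh (t * x)))) := (hc2.tendsto t).comp hθt
    exact t1.mul t2



/-- The pseudo-true parameter converges to the true parameter as the component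
separation vanishes: if for each `ρ > 0`, `θ̄(ρ)` is a nonnegative minimizer of
`θ ↦ KL(g*_ρ ‖ g_θ)`, then `θ̄(ρ) → |θ*|` as `ρ → 0⁺`. -/
theorem kl_projection_tendsto_true_parameter (θs : ℝ) (hθs : θs ≠ 0) (θbar : ℝ → ℝ)
    (hmin : ∀ ρ > (0 : ℝ), 0 ≤ θbar ρ ∧ ∀ θ, klg θs ρ (θbar ρ) ≤ klg θs ρ θ) :
    Filter.Tendsto θbar (nhdsWithin 0 (Set.Ioi 0)) (nhds |θs|) := by
  set C := Cmom θs with hC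
  have hC0 : 0 ≤ C := Cmom_nonneg θs
  set R : ℝ := |θs| + 2 * C with hR
  have hR0 : 0 ≤ R := by positivity
  -- uniform bound on minimizers
  have hbound : ∀ ρ : ℝ, 0 < ρ → ρ ≤ 1 → θbar ρ ≤ R := by
    intro ρ hρ0 hρ1
    obtain ⟨hb0, hbmin⟩ := hmin ρ hρ0
    have h := hbmin |θs|
    rw [klg_eq, klg_eq] at h
    have habs : |ρ| ≤ 1 := by rw [abs_of_pos hρ0]; exact hρ1
    have h1 := T_le θs ρ (θbar ρ) habs
    have h2 := T_nonneg θs ρ |θs|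
    have h3 : |θbar ρ| = θbar ρ := abs_of_nonneg hb0
    rw [h3] at h1
    have hsq : (θbar ρ) ^ 2 ≤ θs ^ 2 + 2 * C * θbar ρ := by
      have := sq_abs θs
      nlinarith
    nlinarith [sq_abs θs, abs_nonneg θs, sq_nonneg (θbar ρ - |θs| - 2 * C)]
  -- reduce to sequences
  rw [Filter.tendsto_iff_seq_tendsto]
  intro ρ hρ
  apply Filter.tendsto_of_subseq_tendsto
  intro ns hns
  have hσ : Filter.Tendsto (fun n => ρ (ns n)) Filter.atTop (nhdsWithin 0 (Set.Ioi 0)) :=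
    hρ.comp hns
  rw [tendsto_nhdsWithin_iff] at hσ
  obtain ⟨hσ0, hσmem⟩ := hσ
  have hσ1 : ∀ᶠ n in Filter.atTop, ρ (ns n) ≤ 1 := by
    have := hσ0.eventually (eventually_le_nhds (by norm_num : (0:ℝ) < 1))
    exact this
  obtain ⟨N, hN⟩ := Filter.eventually_atTop.1 (hσmem.and hσ1)
  set τ : ℕ → ℝ := fun n => ρ (ns (n + N)) with hτ
  have hτpos : ∀ n, 0 < τ n := fun n => (hN (n + N) (by omega)).1
  have hτ1 : ∀ n, τ n ≤ 1 := fun n => (hN (n + N) (by omega)).2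
  have hτ0 : Filter.Tendsto τ Filter.atTop (nhds 0) :=
    hσ0.comp (Filter.tendsto_add_atTop_nat N)
  have hbin : ∀ n, θbar (τ n) ∈ Set.Icc (0:ℝ) R := fun n =>
    ⟨(hmin (τ n) (hτpos n)).1, hbound (τ n) (hτpos n) (hτ1 n)⟩
  obtain ⟨t, htmem, φ, hφ, hφt⟩ := (isCompact_Icc).tendsto_subseq hbin
  refine ⟨fun k => φ k + N, ?_⟩
  have hteq : t = |θs| := by
    -- limit of minimizers is a minimizer of the ρ = 0 problem
    set b : ℕ → ℝ := fun k => θbar (τ (φ k)) with hb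
    set r : ℕ → ℝ := fun k => τ (φ k) with hr
    have hr0 : Filter.Tendsto r Filter.atTop (nhds 0) :=
      hτ0.comp (hφ.tendsto_atTop)
    have hr1 : ∀ k, |r k| ≤ 1 := fun k => by
      rw [abs_of_pos (hτpos (φ k))]; exact hτ1 (φ k)
    have hbB : ∀ k, |b k| ≤ R := fun k => by
      rw [abs_of_nonneg (hbin (φ k)).1]
      exact (hbin (φ k)).2
    have hkey : ∀ θ : ℝ, t ^ 2 / 2 - (∫ x, gstar θs 0 x * Real.log (Real.cosh (t * x)))
        ≤ θ ^ 2 / 2 - ∫ x, gstar θs 0 x * Real.log (Real.cosh (θ * x)) := by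
      intro θ
      have hineq : ∀ k, (b k) ^ 2 / 2 - (∫ x, gstar θs (r k) x * Real.log (Real.cosh (b k * x)))
          ≤ θ ^ 2 / 2 - ∫ x, gstar θs (r k) x * Real.log (Real.cosh (θ * x)) := by
        intro k
        have h := (hmin (r k) (hτpos (φ k))).2 θ
        rw [klg_eq, klg_eq] at h
        linarith
      have hT1 := T_tendsto θs R r b t hr1 hbB hr0 hφt
      have hT2 := T_tendsto θs |θ| r (fun _ => θ) θ hr1 (fun _ => le_refl _) hr0 tendsto_const_nhds
      have hL : Filter.Tendsto (fun k => (b k) ^ 2 / 2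
          - ∫ x, gstar θs (r k) x * Real.log (Real.cosh (b k * x))) Filter.atTop
          (nhds (t ^ 2 / 2 - ∫ x, gstar θs 0 x * Real.log (Real.cosh (t * x)))) := by
        apply Filter.Tendsto.sub _ hT1
        have : Filter.Tendsto (fun k => (b k) ^ 2 / 2) Filter.atTop (nhds (t ^ 2 / 2)) := by
          apply Filter.Tendsto.div_const
          exact (hφt.pow 2)
        exact this
      have hRt : Filter.Tendsto (fun k => θ ^ 2 / 2
          - ∫ x, gstar θs (r k) x * Real.log (Real.cosh (θ * x))) Filter.atTop
          (nhds (θ ^ 2 / 2 - ∫ x, gstar θs 0 x * Real.log (Real.cosh (θ * x)))) :=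
        Filter.Tendsto.sub tendsto_const_nhds hT2
      exact le_of_tendsto_of_tendsto' hL hRt hineq
    -- hence klg θs 0 t ≤ klg θs 0 θ for all θ
    have hklg : ∀ θ, klg θs 0 t ≤ klg θs 0 θ := by
      intro θ
      rw [klg_eq, klg_eq]
      have := hkey θ
      linarith
    have h0 : klg θs 0 t = 0 :=
      le_antisymm (by
        have := hklg |θs|
        rw [klg_zero_self] at this
        exact this) (klg_nonneg θs 0 t)
    rcases klg_zero_eq_case θs t h0 with h1 | h1
    · rcases abs_cases θs with ⟨h2, _⟩ | ⟨h2, h3⟩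
      · rw [h2]; exact h1
      · exfalso
        have ht0 : 0 ≤ t := htmem.1
        have : θs < 0 := h3
        rw [h1] at ht0
        exact hθs (le_antisymm (by linarith) (by linarith))
    · rcases abs_cases θs with ⟨h2, h3⟩ | ⟨h2, _⟩
      · exfalso
        have ht0 : 0 ≤ t := htmem.1
        rw [h1] at ht0
        have : θs ≤ 0 := by linarith
        exact hθs (le_antisymm this h3)
      · rw [h2]; exact h1
  rw [← hteq]
  have : (fun n => (θbar ∘ ρ) (ns (φ n + N))) = fun n => θbar (τ (φ n)) := by
    funext n; rfl
  rw [this]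
  exact hφt

end
end
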